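/- Let p be a prime, n = 2k, and let L : F_{p^n} → F_{p^n} be defined by L(x) = a·x + b·x^{p^k} with a, b ∈ F_{p^n}^*. Let G be the (unique) subgroup of the multiplicative group F_{p^n}^* of order p^k + 1. Then L is a permutation of F_{p^n} if and only if a·b^{-1} does not lie in G. -/

import Mathlib

/-- **Lemma 2.2 (i).** Let `p` be a prime, `n = 2k`, and `L : F_{p^n} → F_{p^n}` be
`L(x) = a·x + b·x^{p^k}` with `a, b ∈ F_{p^n}^*`.  Let `G` be the (unique) subgroup of
`F_{p^n}^*` of order `p^k + 1`.  Then `L` is a permutation of `F_{p^n}` iff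
`a·b⁻¹ ∉ G`. -/
theorem stmt_0 {p k n : ℕ} (hp : p.Prime) (hk : 0 < k) (hn : n = 2 * k)
    {F : Type*} [Field F] [Fintype F] (hcard : Fintype.card F = p ^ n)
    (a b : F) (ha : a ≠ 0) (hb : b ≠ 0)
    (G : Subgroup Fˣ) (hG : Nat.card G = p ^ k + 1) :
    Function.Bijective (fun x : F => a * x + b * x ^ p ^ k) ↔
      Units.mk0 (a * b⁻¹) (mul_ne_zero ha (inv_ne_zero hb)) ∉ G := by
  classical
  haveI hpf : Fact p.Prime := ⟨hp⟩
  set q := p ^ k with hq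
  have hq2 : 2 ≤ q := Nat.one_lt_pow hk.ne' hp.one_lt
  -- the characteristic of F is p
  haveI hchar : CharP F p := by
    obtain ⟨p', hc⟩ := CharP.exists F
    haveI := hc
    obtain ⟨n', hp'', hcard'⟩ := FiniteField.card F p'
    have hpp' : p = p' := by
      have h1 : p ∣ p' ^ (n' : ℕ) := by
        rw [← hcard', hcard]
        exact dvd_pow_self p (by omega)
      have := hp.dvd_of_dvd_pow h1
      exact (Nat.prime_dvd_prime_iff_eq hp hp'').mp this
    rwa [hpp']
  -- cardinalities
  have hcardF : Fintype.card F = q * q := by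
    rw [hcard, hn, two_mul, pow_add]
  have hfac : (q - 1) * (q + 1) + 1 = q * q := by
    obtain ⟨r, hr⟩ : ∃ r, q = r + 1 := ⟨q - 1, by omega⟩
    rw [hr, Nat.add_sub_cancel]
    ring
  have hcardU : Nat.card Fˣ = (q - 1) * (q + 1) := by
    rw [Nat.card_units, Nat.card_eq_fintype_card, hcardF]; omega
  haveI : NeZero (q + 1) := ⟨by omega⟩
  -- G is the group of (q+1)-st roots of unity
  have hGH : G = rootsOfUnity (q + 1) F := by
    refine Subgroup.eq_of_le_of_card_ge ?_ ?_
    · intro x hx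
      rw [mem_rootsOfUnity]
      have h1 : (⟨x, hx⟩ : G) ^ (q + 1) = 1 := by
        rw [← hG]; exact pow_card_eq_one'
      exact_mod_cast congrArg (Subgroup.subtype G) h1
    · rw [hG, Nat.card_eq_fintype_card]
      convert card_rootsOfUnity F (q + 1) using 1
      exact Nat.card_eq_fintype_card.symm
  have hmemG : ∀ v : Fˣ, v ∈ G ↔ v ^ (q + 1) = 1 := fun v => by
    rw [hGH, mem_rootsOfUnity]
  -- (-1)^(q+1) = 1
  have hneg : (-1 : F) ^ (q + 1) = 1 := by
    rcases eq_or_ne p 2 with h2 | h2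
    · subst h2
      haveI : CharP F 2 := hchar
      rw [CharTwo.neg_eq (1 : F), one_pow]
    · have hodd : Odd q := (hp.odd_of_ne_two h2).pow
      exact (Odd.add_one hodd).neg_one_pow
  set u : Fˣ := Units.mk0 (a * b⁻¹) (mul_ne_zero ha (inv_ne_zero hb)) with hu
  -- bijectivity reduces to triviality of the kernel
  have key : Function.Bijective (fun x : F => a * x + b * x ^ q) ↔
      ∀ x : F, a * x + b * x ^ q = 0 → x = 0 := by
    constructor
    · intro hbij x hx
      have h0 : a * (0 : F) + b * (0 : F) ^ q = 0 := by
        rw [zero_pow (by omega : q ≠ 0)]; ring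
      exact hbij.injective (hx.trans h0.symm)
    · intro h
      rw [← Finite.injective_iff_bijective]
      intro x y hxy
      simp only at hxy
      have hsub : a * (x - y) + b * (x - y) ^ q = 0 := by
        rw [hq, sub_pow_char_pow, ← hq]
        linear_combination hxy
      have := h _ hsub
      exact sub_eq_zero.mp this
  -- the main equivalence about existence of a nontrivial kernel element
  have hmain : (∃ x : F, x ≠ 0 ∧ a * x + b * x ^ q = 0) ↔ u ^ (q + 1) = 1 := by
    constructor
    · rintro ⟨x, hx0, hxe⟩
      have hxq : x ^ q = x ^ (q - 1) * x := by
        rw [← pow_succ]; congr 1; omega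
      have h2 : x * (b * x ^ (q - 1)) = x * (-a) := by
        rw [hxq] at hxe; linear_combination hxe
      have h3 := mul_left_cancel₀ hx0 h2
      have hab : a * b⁻¹ = -(x ^ (q - 1)) := by
        field_simp
        linear_combination h3
      ext
      rw [Units.val_pow_eq_pow_val, Units.val_one, hu, Units.val_mk0]
      calc (a * b⁻¹) ^ (q + 1) = (-(x ^ (q - 1))) ^ (q + 1) := by rw [hab]
        _ = (-1 : F) ^ (q + 1) * (x ^ (q - 1)) ^ (q + 1) := by rw [neg_pow]
        _ = x ^ ((q - 1) * (q + 1)) := by rw [hneg, one_mul, pow_mul]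
        _ = x ^ (Fintype.card F - 1) := by rw [hcardF]; congr 1; omega
        _ = 1 := FiniteField.pow_card_sub_one_eq_one x hx0
    · intro hpow
      set v : Fˣ := -u with hv
      have hvpow : v ^ (q + 1) = 1 := by
        have : (-1 : Fˣ) ^ (q + 1) = 1 := by
          ext; push_cast; exact hneg
        rw [hv, neg_eq_neg_one_mul, mul_pow, this, one_mul, hpow]
      obtain ⟨g, hg⟩ := IsCyclic.exists_generator (α := Fˣ)
      obtain ⟨i, hi⟩ : ∃ i : ℕ, g ^ i = v := by
        have := hg v
        rwa [← mem_powers_iff_mem_zpowers, Submonoid.mem_powers_iff] at this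
      have hord : orderOf g = (q - 1) * (q + 1) := by
        rw [orderOf_eq_card_of_forall_mem_zpowers hg, hcardU]
      have hdvd : orderOf g ∣ i * (q + 1) := by
        apply orderOf_dvd_of_pow_eq_one
        rw [pow_mul, hi, hvpow]
      rw [hord] at hdvd
      have hdvd2 : (q - 1) ∣ i :=
        (Nat.mul_dvd_mul_iff_right (show 0 < q + 1 by omega)).mp hdvd
      obtain ⟨j, hj⟩ := hdvd2
      refine ⟨((g ^ j : Fˣ) : F), Units.ne_zero _, ?_⟩
      have hxv : (g ^ j) ^ (q - 1) = v := by
        rw [← pow_mul, mul_comm j (q - 1), ← hj, hi]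
      have hxvF : ((g ^ j : Fˣ) : F) ^ (q - 1) = -(a * b⁻¹) := by
        have h1 : ((g ^ j : Fˣ) : F) ^ (q - 1) = ((v : Fˣ) : F) := by
          rw [← Units.val_pow_eq_pow_val, hxv]
        rw [h1, hv, Units.val_neg, hu, Units.val_mk0]
      set x : F := ((g ^ j : Fˣ) : F) with hx
      have hxq : x ^ q = x ^ (q - 1) * x := by
        rw [← pow_succ]; congr 1; omega
      rw [hxq, hxvF]
      field_simp
      ring
  -- put everything together
  rw [key]
  rw [hmemG u]
  constructor
  · intro h hpow
    obtain ⟨x, hx0, hxe⟩ := hmain.mpr hpow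
    exact hx0 (h x hxe)
  · intro h x hxe
    by_contra hx0
    exact h (hmain.mp ⟨x, hx0, hxe⟩)
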